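/- Let φ: W_{G_2} → S_7 be the homomorphism determined by s_α ↦ (1 2)(3 5)(6 7) and s_β ↦ (2 3)(5 6), where s_α, s_β are the simple reflections of G_2. Then φ is a well-defined injective group homomorphism, and it is compatible with the map f: ℤ^7 → ℤ^3 of the previous statement: for every root s of G_2 and every w ∈ W_{G_2}, the set of A_6-roots mapping to w·s under f equals φ(w) applied to the set of A_6-roots mapping to s. -/

import Mathlib

/-- The `i`-th standard basis vector `e_i` (1-indexed coordinates in `ℕ → ℚ`). -/
def ebq (i : ℕ) : ℕ → ℚ := fun j => if j = i then 1 else 0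

/-- Roots of `A_6` in coordinates `1,…,7`: the vectors `e_a - e_b`, `a ≠ b`. -/
def isA6root (r : ℕ → ℚ) : Prop :=
  ∃ a b : ℕ, 1 ≤ a ∧ a ≤ 7 ∧ 1 ≤ b ∧ b ≤ 7 ∧ a ≠ b ∧ r = ebq a - ebq b

/-- The map `f : ℚ^7 → ℚ^3` determined by `f(e_1) = e_1 - e_3`, `f(e_2) = e_2 - e_3`,
`f(e_3) = e_1 - e_2`, `f(e_4) = 0`, `f(e_5) = -(e_1 - e_2)`, `f(e_6) = -(e_2 - e_3)`,
`f(e_7) = -(e_1 - e_3)`. -/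
def fG (v : ℕ → ℚ) : ℕ → ℚ := fun j =>
  if j = 1 then v 1 + v 3 - v 5 - v 7
  else if j = 2 then v 2 - v 3 + v 5 - v 6
  else if j = 3 then -v 1 - v 2 + v 6 + v 7
  else 0

/-- The simple root `α = e_1 - e_2` of `G_2`. -/
def alphaG : ℕ → ℚ := ebq 1 - ebq 2

/-- The simple root `β = -e_1 + 2e_2 - e_3` of `G_2`. -/
def betaG : ℕ → ℚ := fun j => if j = 1 then -1 else if j = 2 then 2 else if j = 3 then -1 else 0

/-- Roots of `G_2`: `±{α, β, β+α, β+2α, β+3α, 2β+3α}`. -/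
def isG2root (s : ℕ → ℚ) : Prop :=
  s = alphaG ∨ s = betaG ∨ s = betaG + alphaG ∨ s = betaG + 2 • alphaG ∨
    s = betaG + 3 • alphaG ∨ s = 2 • betaG + 3 • alphaG ∨
  s = -alphaG ∨ s = -betaG ∨ s = -(betaG + alphaG) ∨ s = -(betaG + 2 • alphaG) ∨
    s = -(betaG + 3 • alphaG) ∨ s = -(2 • betaG + 3 • alphaG)

/-- The simple reflection `s_α` in `α = e_1 - e_2`: it swaps the coordinates `1, 2`. -/
def sAlpha : (ℕ → ℚ) ≃ₗ[ℚ] (ℕ → ℚ) := LinearEquiv.funCongrLeft ℚ ℚ (Equiv.swap 1 2)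

/-- The simple reflection `s_β` in `β = -e_1 + 2e_2 - e_3`: on the root lattice of
`G_2` (sum-zero vectors supported in coordinates `1, 2, 3`) it acts as the negative
of the coordinate swap `1 ↔ 3`. -/
def sBeta : (ℕ → ℚ) ≃ₗ[ℚ] (ℕ → ℚ) :=
  (LinearEquiv.funCongrLeft ℚ ℚ (Equiv.swap 1 3)).trans (LinearEquiv.neg ℚ)

/-- The Weyl group `W_{G_2}`, generated by the simple reflections `s_α, s_β`. -/
def WG2 : Subgroup ((ℕ → ℚ) ≃ₗ[ℚ] (ℕ → ℚ)) := Subgroup.closure {sAlpha, sBeta}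

/-- The permutation `(1 2)(3 5)(6 7)` of `S_7`. -/
def pAlpha : Equiv.Perm ℕ := Equiv.swap 1 2 * Equiv.swap 3 5 * Equiv.swap 6 7

/-- The permutation `(2 3)(5 6)` of `S_7`. -/
def pBeta : Equiv.Perm ℕ := Equiv.swap 2 3 * Equiv.swap 5 6

/-- The action of a permutation `p ∈ S_7` on `ℚ^7`: `p·e_a = e_{p(a)}`, i.e.
`(p·v)(j) = v(p⁻¹ j)`. -/
def permAct (p : Equiv.Perm ℕ) (v : ℕ → ℚ) : ℕ → ℚ := fun j => v (p.symm j)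

namespace S18

abbrev GLQ := (ℕ → ℚ) ≃ₗ[ℚ] (ℕ → ℚ)

def h1 : Equiv.Perm ℕ →* GLQ where
  toFun p := LinearEquiv.funCongrLeft ℚ ℚ p⁻¹
  map_one' := rfl
  map_mul' p q := rfl

lemma h1_apply (p : Equiv.Perm ℕ) (v : ℕ → ℚ) (j : ℕ) : h1 p v j = v (p⁻¹ j) := rfl

def negE : GLQ := LinearEquiv.neg ℚ

lemma negE_mul_negE : negE * negE = 1 := by
  apply LinearEquiv.ext; intro v; show -(-v) = v; simp

lemma comm_negE (g : GLQ) : Commute g negE := by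
  unfold Commute SemiconjBy
  apply LinearEquiv.ext; intro v
  show g (-v) = -(g v)
  simp

def h2 : ℤˣ →* GLQ where
  toFun u := if u = 1 then 1 else negE
  map_one' := if_pos rfl
  map_mul' u v := by
    rcases Int.units_eq_one_or u with h | h <;> rcases Int.units_eq_one_or v with h' | h' <;>
      subst h h' <;> simp <;> first | rfl | (try exact negE_mul_negE.symm)

def finEquiv3 : Fin 3 ≃ {n : ℕ // n ∈ ({1,2,3} : Finset ℕ)} where
  toFun i := ⟨(i : ℕ) + 1, by fin_cases i <;> decide⟩
  invFun s := ⟨s.1 - 1, by have := s.2; simp only [Finset.mem_insert, Finset.mem_singleton] at this; omega⟩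
  left_inv := by decide
  right_inv := by decide

def extP : Equiv.Perm (Fin 3) →* Equiv.Perm ℕ := Equiv.Perm.extendDomainHom finEquiv3

lemma extP_swap01 : extP (Equiv.swap 0 1) = Equiv.swap 1 2 := by
  apply Equiv.ext; intro j
  by_cases hj : j ∈ ({1,2,3} : Finset ℕ)
  · fin_cases hj <;> decide
  · simp only [Finset.mem_insert, Finset.mem_singleton, not_or] at hj
    rw [show extP (Equiv.swap 0 1) j = j from
      Equiv.Perm.extendDomain_apply_not_subtype _ _ (by simpa using hj)]
    rw [Equiv.swap_apply_of_ne_of_ne hj.1 hj.2.1]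

lemma extP_swap02 : extP (Equiv.swap 0 2) = Equiv.swap 1 3 := by
  apply Equiv.ext; intro j
  by_cases hj : j ∈ ({1,2,3} : Finset ℕ)
  · fin_cases hj <;> decide
  · simp only [Finset.mem_insert, Finset.mem_singleton, not_or] at hj
    rw [show extP (Equiv.swap 0 2) j = j from
      Equiv.Perm.extendDomain_apply_not_subtype _ _ (by simpa using hj)]
    rw [Equiv.swap_apply_of_ne_of_ne hj.1 hj.2.2]

abbrev A := Equiv.Perm (Fin 3) × ℤˣ

def iota : A →* GLQ := MonoidHom.noncommCoprod (h1.comp extP) h2 (by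
  intro σ u
  rcases Int.units_eq_one_or u with h | h <;> subst h
  · simp [h2]
  · simpa [h2, iff_false] using comm_negE _)

def a1 : A := (Equiv.swap 0 1, 1)
def a2 : A := (Equiv.swap 0 2, -1)

lemma iota_a1 : iota a1 = sAlpha := by
  show (h1.comp extP) a1.1 * h2 a1.2 = sAlpha
  rw [show h2 a1.2 = 1 from rfl, mul_one]
  show h1 (extP (Equiv.swap 0 1)) = sAlpha
  rw [extP_swap01]
  show LinearEquiv.funCongrLeft ℚ ℚ (Equiv.swap 1 2)⁻¹ = sAlpha
  rw [Equiv.swap_inv]; rfl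

lemma iota_a2 : iota a2 = sBeta := by
  show (h1.comp extP) a2.1 * h2 a2.2 = sBeta
  rw [show h2 a2.2 = negE by simp [h2, a2]]
  show h1 (extP (Equiv.swap 0 2)) * negE = sBeta
  rw [extP_swap02]
  apply LinearEquiv.ext; intro v
  show ((LinearEquiv.funCongrLeft ℚ ℚ (Equiv.swap 1 3)⁻¹) (negE v)) = sBeta v
  rw [Equiv.swap_inv]
  funext j
  show (-v) (Equiv.swap 1 3 j) = -(v (Equiv.swap 1 3 j))
  rfl

abbrev X := {x : Fin 3 × Fin 3 // x.1 ≠ x.2}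

def gact (a : A) (x : X) : X :=
  if a.2 = 1 then ⟨(a.1 x.1.1, a.1 x.1.2), fun h => x.2 (a.1.injective h)⟩
  else ⟨(a.1 x.1.2, a.1 x.1.1), fun h => x.2 (a.1.injective h).symm⟩

lemma gact_one (x : X) : gact 1 x = x := by
  unfold gact
  rw [if_pos (show (1 : A).2 = 1 from rfl)]
  exact Subtype.ext rfl

lemma gact_mul (a b : A) (x : X) : gact (a * b) x = gact a (gact b x) := by
  unfold gact
  rcases Int.units_eq_one_or a.2 with h | h <;> rcases Int.units_eq_one_or b.2 with h' | h'
  · rw [if_pos (show (a*b).2 = 1 by rw [Prod.snd_mul, h, h']; norm_num),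
      if_pos h', if_pos h]
    exact Subtype.ext rfl
  · rw [if_neg (show ¬((a*b).2 = 1) by rw [Prod.snd_mul, h, h']; decide),
      if_neg (show ¬(b.2 = 1) by rw [h']; decide), if_pos h]
    exact Subtype.ext rfl
  · rw [if_neg (show ¬((a*b).2 = 1) by rw [Prod.snd_mul, h, h']; decide),
      if_pos h', if_neg (show ¬(a.2 = 1) by rw [h]; decide)]
    exact Subtype.ext rfl
  · rw [if_pos (show (a*b).2 = 1 by rw [Prod.snd_mul, h, h']; decide),
      if_neg (show ¬(b.2 = 1) by rw [h']; decide),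
      if_neg (show ¬(a.2 = 1) by rw [h]; decide)]
    exact Subtype.ext rfl

def act : A →* Equiv.Perm X where
  toFun a :=
    { toFun := gact a
      invFun := gact a⁻¹
      left_inv := fun x => by rw [← gact_mul, inv_mul_cancel, gact_one]
      right_inv := fun x => by rw [← gact_mul, mul_inv_cancel, gact_one] }
  map_one' := Equiv.ext fun x => gact_one x
  map_mul' a b := Equiv.ext fun x => gact_mul a b x

def encN : Fin 3 → Fin 3 → ℕ := fun i j =>
  if i = 0 then (if j = 1 then 3 else 1)
  else if i = 1 then (if j = 0 then 5 else 2)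
  else (if j = 0 then 7 else 6)

lemma encN_mem : ∀ i j : Fin 3, encN i j ∈ ({1,2,3,5,6,7} : Finset ℕ) := by decide

def decN (n : ℕ) : X :=
  if n = 1 then ⟨(0,2), by decide⟩
  else if n = 2 then ⟨(1,2), by decide⟩
  else if n = 3 then ⟨(0,1), by decide⟩
  else if n = 5 then ⟨(1,0), by decide⟩
  else if n = 6 then ⟨(2,1), by decide⟩
  else ⟨(2,0), by decide⟩

def fX : X ≃ {n : ℕ // n ∈ ({1,2,3,5,6,7} : Finset ℕ)} where
  toFun x := ⟨encN x.1.1 x.1.2, encN_mem _ _⟩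
  invFun s := decN s.1
  left_inv := by decide
  right_inv := by decide

def kappa : A →* Equiv.Perm ℕ := (Equiv.Perm.extendDomainHom fX).comp act

lemma kappa_a1 : kappa a1 = pAlpha := by
  apply Equiv.ext; intro j
  by_cases hj : j ∈ ({1,2,3,5,6,7} : Finset ℕ)
  · fin_cases hj <;> decide
  · simp only [Finset.mem_insert, Finset.mem_singleton, not_or] at hj
    obtain ⟨h1, h2, h3, h5, h6, h7⟩ := hj
    rw [show kappa a1 j = j from
      Equiv.Perm.extendDomain_apply_not_subtype _ _ (by simp [h1,h2,h3,h5,h6,h7])]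
    symm
    show (Equiv.swap 1 2) ((Equiv.swap 3 5) ((Equiv.swap 6 7) j)) = j
    rw [Equiv.swap_apply_of_ne_of_ne h6 h7, Equiv.swap_apply_of_ne_of_ne h3 h5,
      Equiv.swap_apply_of_ne_of_ne h1 h2]

lemma kappa_a2 : kappa a2 = pBeta := by
  apply Equiv.ext; intro j
  by_cases hj : j ∈ ({1,2,3,5,6,7} : Finset ℕ)
  · fin_cases hj <;> decide
  · simp only [Finset.mem_insert, Finset.mem_singleton, not_or] at hj
    obtain ⟨h1, h2, h3, h5, h6, h7⟩ := hj
    rw [show kappa a2 j = j from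
      Equiv.Perm.extendDomain_apply_not_subtype _ _ (by simp [h1,h2,h3,h5,h6,h7])]
    symm
    show (Equiv.swap 2 3) ((Equiv.swap 5 6) j) = j
    rw [Equiv.swap_apply_of_ne_of_ne h5 h6, Equiv.swap_apply_of_ne_of_ne h2 h3]

lemma kappa_inj : Function.Injective kappa := by
  have hact : Function.Injective act := by
    intro a b hab
    have key : ∀ a b : A, act a = act b → a = b := by decide
    exact key a b hab
  exact (Equiv.Perm.extendDomainHom_injective fX).comp hact

lemma h2_one : h2 (1 : ℤˣ) = 1 := map_one h2

lemma h2_negone : h2 (-1 : ℤˣ) = negE := by simp [h2]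

lemma iota_one_apply (σ : Equiv.Perm (Fin 3)) (v : ℕ → ℚ) (j : ℕ) :
    iota (σ, (1:ℤˣ)) v j = v ((extP σ)⁻¹ j) := by
  show ((h1.comp extP) σ * h2 1) v j = _
  rw [h2_one, mul_one]
  rfl

lemma iota_neg_apply (σ : Equiv.Perm (Fin 3)) (v : ℕ → ℚ) (j : ℕ) :
    iota (σ, (-1:ℤˣ)) v j = -v ((extP σ)⁻¹ j) := by
  show ((h1.comp extP) σ * h2 (-1)) v j = _
  rw [h2_negone]
  rfl

lemma iota_inj : Function.Injective iota := by
  rw [injective_iff_map_eq_one]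
  rintro ⟨σ, ε⟩ h
  rcases Int.units_eq_one_or ε with hε | hε <;> subst hε
  · have hext : extP σ = 1 := by
      apply Equiv.ext; intro j
      have hv := congrFun (congrArg (fun g : GLQ => g (ebq ((extP σ)⁻¹ j))) h) j
      rw [iota_one_apply] at hv
      have h1' : ebq ((extP σ)⁻¹ j) ((extP σ)⁻¹ j) = 1 := by simp [ebq]
      rw [h1'] at hv
      have : j = (extP σ)⁻¹ j := by
        by_contra hne
        rw [show (1 : GLQ) (ebq ((extP σ)⁻¹ j)) j = ebq ((extP σ)⁻¹ j) j from rfl] at hv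
        simp only [ebq, if_neg hne] at hv
        norm_num at hv
      show extP σ j = (1 : Equiv.Perm ℕ) j
      rw [Equiv.Perm.one_apply]
      conv_lhs => rw [this]
      exact (extP σ).apply_symm_apply j
    have hσ : σ = 1 := by
      have := hext
      rwa [show extP σ = σ.extendDomain finEquiv3 from rfl,
        Equiv.Perm.extendDomain_eq_one_iff] at this
    rw [hσ]; rfl
  · exfalso
    have hv := congrFun (congrArg (fun g : GLQ => g (fun _ => (1:ℚ))) h) 0
    rw [iota_neg_apply] at hv
    norm_num at hv

def BB : Subgroup A := Subgroup.closure {a1, a2}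

lemma hmap : Subgroup.map iota BB = WG2 := by
  show Subgroup.map iota (Subgroup.closure {a1, a2}) = Subgroup.closure {sAlpha, sBeta}
  rw [MonoidHom.map_closure]
  congr 1
  rw [Set.image_insert_eq, Set.image_singleton, iota_a1, iota_a2]

noncomputable def psi : WG2 ≃* BB :=
  (MulEquiv.subgroupCongr hmap.symm).trans (BB.equivMapOfInjective iota iota_inj).symm

lemma iota_psi (w : WG2) : iota ((psi w : BB) : A) = (w : GLQ) := by
  have h1 : iota ((psi w : BB) : A) = ((BB.equivMapOfInjective iota iota_inj (psi w) : Subgroup.map iota BB) : GLQ) :=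
    (Subgroup.coe_equivMapOfInjective_apply _ _ _ _).symm
  rw [h1]
  have h2 : BB.equivMapOfInjective iota iota_inj (psi w)
      = MulEquiv.subgroupCongr hmap.symm w := MulEquiv.apply_symm_apply _ _
  rw [h2, MulEquiv.subgroupCongr_apply]

noncomputable def phi : WG2 →* Equiv.Perm ℕ := (kappa.comp BB.subtype).comp psi.toMonoidHom

lemma phi_inj : Function.Injective phi :=
  kappa_inj.comp (Subtype.coe_injective.comp psi.injective)

lemma phi_apply (w : WG2) : phi w = kappa ((psi w : BB) : A) := rfl

lemma phi_sAlpha (h : sAlpha ∈ WG2) : phi ⟨sAlpha, h⟩ = pAlpha := by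
  have key : ((psi ⟨sAlpha, h⟩ : BB) : A) = a1 := by
    apply iota_inj
    rw [iota_psi, iota_a1]
  rw [phi_apply, key, kappa_a1]

lemma phi_sBeta (h : sBeta ∈ WG2) : phi ⟨sBeta, h⟩ = pBeta := by
  have key : ((psi ⟨sBeta, h⟩ : BB) : A) = a2 := by
    apply iota_inj
    rw [iota_psi, iota_a2]
  rw [phi_apply, key, kappa_a2]

lemma sAlpha_apply (u : ℕ → ℚ) (j : ℕ) : sAlpha u j = u (Equiv.swap 1 2 j) := rfl
lemma sBeta_apply (u : ℕ → ℚ) (j : ℕ) : sBeta u j = -(u (Equiv.swap 1 3 j)) := rfl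

lemma fG1 (v : ℕ → ℚ) : fG v 1 = v 1 + v 3 - v 5 - v 7 := by simp [fG]
lemma fG2 (v : ℕ → ℚ) : fG v 2 = v 2 - v 3 + v 5 - v 6 := by simp [fG]
lemma fG3 (v : ℕ → ℚ) : fG v 3 = -v 1 - v 2 + v 6 + v 7 := by simp [fG]
lemma fG0 (v : ℕ → ℚ) (j : ℕ) (h1 : j ≠ 1) (h2 : j ≠ 2) (h3 : j ≠ 3) : fG v j = 0 := by
  simp [fG, h1, h2, h3]

lemma int_alpha (v : ℕ → ℚ) : fG (permAct pAlpha v) = sAlpha (fG v) := by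
  funext j
  rw [sAlpha_apply]
  have e1 : pAlpha.symm 1 = 2 := by decide
  have e2 : pAlpha.symm 2 = 1 := by decide
  have e3 : pAlpha.symm 3 = 5 := by decide
  have e5 : pAlpha.symm 5 = 3 := by decide
  have e6 : pAlpha.symm 6 = 7 := by decide
  have e7 : pAlpha.symm 7 = 6 := by decide
  by_cases h1 : j = 1
  · subst h1
    rw [show Equiv.swap 1 2 1 = 2 from by decide, fG1, fG2]
    simp only [permAct, e1, e3, e5, e7]
    ring
  by_cases h2 : j = 2
  · subst h2
    rw [show Equiv.swap 1 2 2 = 1 from by decide, fG2, fG1]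
    simp only [permAct, e2, e3, e5, e6]
    ring
  by_cases h3 : j = 3
  · subst h3
    rw [show Equiv.swap 1 2 3 = 3 from by decide, fG3, fG3]
    simp only [permAct, e1, e2, e6, e7]
    ring
  · rw [show Equiv.swap 1 2 j = j from Equiv.swap_apply_of_ne_of_ne h1 h2,
      fG0 _ j h1 h2 h3, fG0 _ j h1 h2 h3]

lemma int_beta (v : ℕ → ℚ) : fG (permAct pBeta v) = sBeta (fG v) := by
  funext j
  rw [sBeta_apply]
  have e1 : pBeta.symm 1 = 1 := by decide
  have e2 : pBeta.symm 2 = 3 := by decide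
  have e3 : pBeta.symm 3 = 2 := by decide
  have e5 : pBeta.symm 5 = 6 := by decide
  have e6 : pBeta.symm 6 = 5 := by decide
  have e7 : pBeta.symm 7 = 7 := by decide
  by_cases h1 : j = 1
  · subst h1
    rw [show Equiv.swap 1 3 1 = 3 from by decide, fG1, fG3]
    simp only [permAct, e1, e3, e5, e7]
    ring
  by_cases h2 : j = 2
  · subst h2
    rw [show Equiv.swap 1 3 2 = 2 from by decide, fG2, fG2]
    simp only [permAct, e2, e3, e5, e6]
    ring
  by_cases h3 : j = 3
  · subst h3
    rw [show Equiv.swap 1 3 3 = 1 from by decide, fG3, fG1]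
    simp only [permAct, e1, e2, e6, e7]
    ring
  · rw [show Equiv.swap 1 3 j = j from Equiv.swap_apply_of_ne_of_ne h1 h3,
      fG0 _ j h1 h2 h3, fG0 _ j h1 h2 h3]
    ring

lemma pres_alpha (j : ℕ) : (1 ≤ j ∧ j ≤ 7) ↔ (1 ≤ pAlpha j ∧ pAlpha j ≤ 7) := by
  by_cases h : j ≤ 7
  · interval_cases j <;> decide
  · have hfix : pAlpha j = j := by
      have n1 : j ≠ 1 := by omega
      have n2 : j ≠ 2 := by omega
      have n3 : j ≠ 3 := by omega
      have n5 : j ≠ 5 := by omega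
      have n6 : j ≠ 6 := by omega
      have n7 : j ≠ 7 := by omega
      show (Equiv.swap 1 2) ((Equiv.swap 3 5) ((Equiv.swap 6 7) j)) = j
      rw [Equiv.swap_apply_of_ne_of_ne n6 n7, Equiv.swap_apply_of_ne_of_ne n3 n5,
        Equiv.swap_apply_of_ne_of_ne n1 n2]
    rw [hfix]

lemma pres_beta (j : ℕ) : (1 ≤ j ∧ j ≤ 7) ↔ (1 ≤ pBeta j ∧ pBeta j ≤ 7) := by
  by_cases h : j ≤ 7
  · interval_cases j <;> decide
  · have hfix : pBeta j = j := by
      have n2 : j ≠ 2 := by omega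
      have n3 : j ≠ 3 := by omega
      have n5 : j ≠ 5 := by omega
      have n6 : j ≠ 6 := by omega
      show (Equiv.swap 2 3) ((Equiv.swap 5 6) j) = j
      rw [Equiv.swap_apply_of_ne_of_ne n5 n6, Equiv.swap_apply_of_ne_of_ne n2 n3]
    rw [hfix]

def IP (x : GLQ) (p : Equiv.Perm ℕ) : Prop :=
  (∀ v, fG (permAct p v) = x (fG v)) ∧ ∀ j : ℕ, (1 ≤ j ∧ j ≤ 7) ↔ (1 ≤ p j ∧ p j ≤ 7)

lemma IP_mul {x y : GLQ} {px py : Equiv.Perm ℕ} (hx : IP x px) (hy : IP y py) :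
    IP (x * y) (px * py) := by
  constructor
  · intro v
    calc fG (permAct (px * py) v) = fG (permAct px (permAct py v)) := rfl
      _ = x (fG (permAct py v)) := hx.1 _
      _ = x (y (fG v)) := by rw [hy.1]
      _ = (x * y) (fG v) := rfl
  · intro j
    have h1 := hy.2 j
    have h2 := hx.2 (py j)
    exact h1.trans h2

lemma IP_inv {x : GLQ} {px : Equiv.Perm ℕ} (hx : IP x px) : IP x⁻¹ px⁻¹ := by
  have hcan : ∀ r : ℕ → ℚ, permAct px (permAct px⁻¹ r) = r := by
    intro r; funext j
    show r (px (px.symm j)) = r j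
    rw [Equiv.apply_symm_apply]
  constructor
  · intro v
    have h0 := hx.1 (permAct px⁻¹ v)
    rw [hcan] at h0
    have h2 : x ((x⁻¹ : GLQ) (fG v)) = fG v := x.apply_symm_apply _
    apply x.injective
    rw [h2]
    exact h0.symm
  · intro j
    have := hx.2 (px⁻¹ j)
    rw [show px (px⁻¹ j) = j from px.apply_symm_apply j] at this
    exact this.symm

lemma main (x : GLQ) (hx : x ∈ WG2) : IP x (phi ⟨x, hx⟩) := by
  induction hx using Subgroup.closure_induction with
  | mem y hy =>
    rcases hy with rfl | rfl
    · exact (congrArg (IP sAlpha) (phi_sAlpha _)).mpr ⟨int_alpha, pres_alpha⟩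
    · exact (congrArg (IP sBeta) (phi_sBeta _)).mpr ⟨int_beta, pres_beta⟩
  | one =>
    rw [show (⟨1, Subgroup.one_mem _⟩ : WG2) = 1 from rfl, map_one]
    exact ⟨fun v => rfl, fun j => Iff.rfl⟩
  | mul y z hy hz ihy ihz =>
    have e : phi (⟨y * z, mul_mem hy hz⟩ : WG2) = phi ⟨y, hy⟩ * phi ⟨z, hz⟩ := by
      rw [← map_mul phi (⟨y, hy⟩ : WG2) ⟨z, hz⟩]
      rfl
    rw [e]
    exact IP_mul ihy ihz
  | inv y hy ihy =>
    have e : phi (⟨y⁻¹, inv_mem hy⟩ : WG2) = (phi ⟨y, hy⟩)⁻¹ := by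
      rw [← map_inv phi (⟨y, hy⟩ : WG2)]
      rfl
    rw [e]
    exact IP_inv ihy

lemma permAct_pair (q : Equiv.Perm ℕ) (a b : ℕ) :
    permAct q (ebq a - ebq b) = ebq (q a) - ebq (q b) := by
  funext j
  show (ebq a - ebq b) (q.symm j) = _
  simp only [Pi.sub_apply, ebq]
  simp only [Equiv.symm_apply_eq]

lemma permAct_cancel (q : Equiv.Perm ℕ) (r : ℕ → ℚ) : permAct q (permAct q⁻¹ r) = r := by
  funext j
  show r (q (q.symm j)) = r j
  rw [Equiv.apply_symm_apply]

end S18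

/-- there is a well-defined injective group homomorphism
`φ : W_{G_2} → S_7` with `s_α ↦ (1 2)(3 5)(6 7)` and `s_β ↦ (2 3)(5 6)`, and `φ` is
compatible with `f`: for every root `s` of `G_2` and every `w ∈ W_{G_2}`, the set
of `A_6`-roots mapping to `w·s` under `f` equals `φ(w)` applied to the set of
`A_6`-roots mapping to `s`. -/
theorem stmt_18 :
    ∃ φ : WG2 →* Equiv.Perm ℕ,
      φ ⟨sAlpha, Subgroup.subset_closure (by simp)⟩ = pAlpha ∧
      φ ⟨sBeta, Subgroup.subset_closure (by simp)⟩ = pBeta ∧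
      Function.Injective φ ∧
      ∀ w : WG2, ∀ s : ℕ → ℚ, isG2root s →
        {r : ℕ → ℚ | isA6root r ∧ fG r = (w : (ℕ → ℚ) ≃ₗ[ℚ] (ℕ → ℚ)) s}
          = permAct (φ w) '' {r : ℕ → ℚ | isA6root r ∧ fG r = s} := by
  refine ⟨S18.phi, S18.phi_sAlpha _, S18.phi_sBeta _, S18.phi_inj, ?_⟩
  rintro ⟨x, hx⟩ s _
  have hm := S18.main x hx
  set p := S18.phi ⟨x, hx⟩ with hp
  ext r
  simp only [Set.mem_setOf_eq, Set.mem_image]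
  constructor
  · rintro ⟨hroot, hfg⟩
    refine ⟨permAct p⁻¹ r, ⟨?_, ?_⟩, S18.permAct_cancel p r⟩
    · obtain ⟨a, b, ha1, ha7, hb1, hb7, hab, rfl⟩ := hroot
      have hma := hm.2 (p⁻¹ a)
      rw [show p (p⁻¹ a) = a from p.apply_symm_apply a] at hma
      have hmb := hm.2 (p⁻¹ b)
      rw [show p (p⁻¹ b) = b from p.apply_symm_apply b] at hmb
      obtain ⟨ha1', ha7'⟩ := hma.mpr ⟨ha1, ha7⟩
      obtain ⟨hb1', hb7'⟩ := hmb.mpr ⟨hb1, hb7⟩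
      exact ⟨p⁻¹ a, p⁻¹ b, ha1', ha7', hb1', hb7',
        fun hh => hab ((p⁻¹).injective hh), S18.permAct_pair p⁻¹ a b⟩
    · have h0 := hm.1 (permAct p⁻¹ r)
      rw [S18.permAct_cancel] at h0
      exact (LinearEquiv.injective _) (h0.symm.trans hfg)
  · rintro ⟨r0, ⟨hroot0, hfg0⟩, rfl⟩
    constructor
    · obtain ⟨a, b, ha1, ha7, hb1, hb7, hab, rfl⟩ := hroot0
      obtain ⟨ha1', ha7'⟩ := (hm.2 a).mp ⟨ha1, ha7⟩
      obtain ⟨hb1', hb7'⟩ := (hm.2 b).mp ⟨hb1, hb7⟩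
      exact ⟨p a, p b, ha1', ha7', hb1', hb7',
        fun hh => hab (p.injective hh), S18.permAct_pair p a b⟩
    · rw [hm.1 r0, hfg0]
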